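/- Let γ = √(κ² + 2σ²) with κ, θ, σ > 0, and A(u) = (2κθ/σ²)·log( 2γ e^{(κ+γ)u/2} / (2γ + (γ+κ)(e^{γu} − 1)) ). Then A(0) = 0, A(u) ≤ 0 for all u ≥ 0, and A solves A'(u) = −κθ B(u) where B(u) = 2(e^{γu} − 1)/(2γ + (γ+κ)(e^{γu} − 1)). -/

import Mathlib

open Real

/-- With `γ = √(κ² + 2σ²)` and
`A u = (2κθ/σ²) log(2γ e^{(κ+γ)u/2} / (2γ + (γ+κ)(e^{γu} − 1)))`, we have `A 0 = 0`,
`A u ≤ 0` for all `u ≥ 0`, and `A' u = −κθ B u` where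
`B u = 2(e^{γu} − 1)/(2γ + (γ+κ)(e^{γu} − 1))`. -/
theorem cir_A_props (κ θ σ : ℝ) (hκ : 0 < κ) (hθ : 0 < θ) (hσ : 0 < σ)
    (γ : ℝ) (hγ : γ = Real.sqrt (κ ^ 2 + 2 * σ ^ 2))
    (A B : ℝ → ℝ)
    (hA : A = fun u => 2 * κ * θ / σ ^ 2 *
      Real.log (2 * γ * Real.exp ((κ + γ) * u / 2) /
        (2 * γ + (γ + κ) * (Real.exp (γ * u) - 1))))
    (hB : B = fun u => 2 * (Real.exp (γ * u) - 1) /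
      (2 * γ + (γ + κ) * (Real.exp (γ * u) - 1))) :
    A 0 = 0 ∧ (∀ u ≥ (0 : ℝ), A u ≤ 0) ∧
      ∀ u : ℝ, HasDerivAt A (-(κ * θ) * B u) u := by
  have hσ2 : (0:ℝ) < σ ^ 2 := by positivity
  have hγ2 : γ ^ 2 = κ ^ 2 + 2 * σ ^ 2 := by
    rw [hγ, sq_sqrt]; positivity
  have hγpos : 0 < γ := by
    rw [hγ]; exact Real.sqrt_pos.2 (by positivity)
  have hκγ : κ < γ := by nlinarith
  -- denominator positivity
  have hD : ∀ u : ℝ, 0 < 2 * γ + (γ + κ) * (Real.exp (γ * u) - 1) := by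
    intro u
    have h1 : 0 < Real.exp (γ * u) := Real.exp_pos _
    nlinarith
  -- key inequality (weighted AM-GM)
  have key : ∀ u : ℝ, 2 * γ * Real.exp ((κ + γ) * u / 2) ≤
      2 * γ + (γ + κ) * (Real.exp (γ * u) - 1) := by
    intro u
    have hw₁ : (0:ℝ) ≤ (γ - κ) / (2 * γ) := div_nonneg (by linarith) (by positivity)
    have hw₂ : (0:ℝ) ≤ (γ + κ) / (2 * γ) := by positivity
    have hw : (γ - κ) / (2 * γ) + (γ + κ) / (2 * γ) = 1 := by
      field_simp; ring
    have h := Real.geom_mean_le_arith_mean2_weighted hw₁ hw₂ zero_le_one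
      (Real.exp_pos (γ * u)).le hw
    rw [Real.one_rpow, one_mul, ← Real.exp_log (Real.exp_pos (γ * u)),
      ← Real.exp_mul, Real.log_exp] at h
    have hexp : γ * u * ((γ + κ) / (2 * γ)) = (κ + γ) * u / 2 := by
      field_simp; ring
    rw [hexp, mul_one] at h
    have h2γ : (0:ℝ) < 2 * γ := by positivity
    have := mul_le_mul_of_nonneg_left h h2γ.le
    calc 2 * γ * Real.exp ((κ + γ) * u / 2) ≤
        2 * γ * ((γ - κ) / (2 * γ) + (γ + κ) / (2 * γ) * Real.exp (γ * u)) := this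
      _ = 2 * γ + (γ + κ) * (Real.exp (γ * u) - 1) := by field_simp; ring
  have hc : (0:ℝ) ≤ 2 * κ * θ / σ ^ 2 := by positivity
  refine ⟨?_, ?_, ?_⟩
  · rw [hA]
    simp only [mul_zero, zero_div, Real.exp_zero, mul_one]
    have h1 : 2 * γ + (γ + κ) * ((1:ℝ) - 1) = 2 * γ := by ring
    rw [h1, div_self (by positivity : (2*γ:ℝ) ≠ 0), Real.log_one, mul_zero]
  · intro u _
    rw [hA]
    have hNpos : 0 < 2 * γ * Real.exp ((κ + γ) * u / 2) := by positivity
    have hlog : Real.log (2 * γ * Real.exp ((κ + γ) * u / 2) /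
        (2 * γ + (γ + κ) * (Real.exp (γ * u) - 1))) ≤ 0 := by
      apply Real.log_nonpos
      · exact div_nonneg (by positivity) (hD u).le
      · rw [div_le_one (hD u)]; exact key u
    exact mul_nonpos_of_nonneg_of_nonpos hc hlog
  · intro u
    set c : ℝ := 2 * κ * θ / σ ^ 2 with hc'
    -- rewrite A as a nicer function
    have hAeq : A = fun u => c * (Real.log (2 * γ) + (κ + γ) * u / 2 -
        Real.log (2 * γ + (γ + κ) * (Real.exp (γ * u) - 1))) := by
      rw [hA]; funext v
      have hN : (2 * γ) * Real.exp ((κ + γ) * v / 2) ≠ 0 := by positivity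
      rw [Real.log_div hN (hD v).ne', Real.log_mul (by positivity)
        (Real.exp_ne_zero _), Real.log_exp]
    rw [hAeq]
    have hderivD : HasDerivAt (fun v : ℝ => 2 * γ + (γ + κ) * (Real.exp (γ * v) - 1))
        ((γ + κ) * (Real.exp (γ * u) * γ)) u := by
      have : HasDerivAt (fun v : ℝ => Real.exp (γ * v)) (Real.exp (γ * u) * γ) u := by
        simpa using ((hasDerivAt_id u).const_mul γ).exp
      exact ((this.sub_const 1).const_mul _).const_add _
    have hlogD : HasDerivAt (fun v : ℝ => Real.log (2 * γ + (γ + κ) * (Real.exp (γ * v) - 1)))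
        ((γ + κ) * (Real.exp (γ * u) * γ) / (2 * γ + (γ + κ) * (Real.exp (γ * u) - 1))) u :=
      hderivD.log (hD u).ne'
    have hlin : HasDerivAt (fun v : ℝ => Real.log (2 * γ) + (κ + γ) * v / 2)
        ((κ + γ) / 2) u := by
      simpa using (((hasDerivAt_id u).const_mul (κ + γ)).div_const 2).const_add (Real.log (2 * γ))
    have hfull := ((hlin.sub hlogD).const_mul c)
    convert hfull using 1
    case e'_4 => rfl
    case e'_5 => rfl
    case e'_8 => rfl
    rw [hB, hc']
    have hDu := hD u
    have hDu' : 2 * γ + (rexp (γ * u) - 1) * (γ + κ) ≠ 0 := by linarith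
    field_simp
    ring_nf
    linear_combination (Real.exp (γ * u) - 1) * hγ2
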